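/- Let X be a nontrivial real Banach space, T : X →L[ℝ] X a bounded linear operator, and ℓ ≥ 1 an integer. Then the Bochner integral representation of the ℓ-th phi-function agrees with its power series: (1/(ℓ−1)!) · ∫_{θ∈[0,1]} θ^{ℓ−1} · exp((1−θ)·T) dθ = ∑_{k=0}^{∞} T^k/(ℓ+k)!, where the series converges in operator norm. -/

import Mathlib

open MeasureTheory intervalIntegral
open scoped Nat

lemma beta_nat (b a : ℕ) :
    ∫ x in (0:ℝ)..1, x ^ a * (1 - x) ^ b = (a ! * b ! : ℝ) / (a + b + 1)! := by
  induction b generalizing a with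
  | zero =>
    simp only [pow_zero, mul_one, integral_pow, Nat.factorial_succ, Nat.factorial_zero]
    push_cast
    have : ((a:ℝ)+1) ≠ 0 := by positivity
    have h3 : ((a ! : ℝ)) ≠ 0 := by positivity
    field_simp
    simp
  | succ b ih =>
    have hu : ∀ x ∈ Set.uIcc (0:ℝ) 1, HasDerivAt (fun x : ℝ => (1 - x) ^ (b + 1))
        (-((b+1) * (1 - x) ^ b)) x := by
      intro x _
      have h := ((hasDerivAt_id x).const_sub 1).fun_pow (b+1)
      simpa using h
    have hv : ∀ x ∈ Set.uIcc (0:ℝ) 1, HasDerivAt (fun x : ℝ => x ^ (a + 1) / (a + 1))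
        (x ^ a) x := by
      intro x _
      have h := (hasDerivAt_pow (a+1) x).div_const (a+1)
      have hne : ((a:ℝ)+1) ≠ 0 := by positivity
      simpa [mul_comm, mul_div_assoc, mul_div_cancel_left₀, hne] using h
    have key := intervalIntegral.integral_mul_deriv_eq_deriv_mul hu hv
      (by apply Continuous.intervalIntegrable; continuity)
      (by apply Continuous.intervalIntegrable; continuity)
    have h1 : ∫ x in (0:ℝ)..1, x ^ a * (1 - x) ^ (b+1)
        = ∫ x in (0:ℝ)..1, (1 - x) ^ (b+1) * x ^ a := by
      congr 1; ext x; ring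
    rw [h1, key]
    have h2 : ∫ x in (0:ℝ)..1, -((b+1) * (1 - x) ^ b) * (x ^ (a+1) / (a+1))
        = (-((b:ℝ)+1) / ((a:ℝ)+1)) * ∫ x in (0:ℝ)..1, x ^ (a+1) * (1 - x) ^ b := by
      rw [← intervalIntegral.integral_const_mul]
      congr 1; ext x; field_simp
    rw [h2, ih (a+1), show (a+1)+b+1 = a+(b+1)+1 from by omega,
      show a+(b+1) = a+b+1 from by omega]
    simp only [Nat.factorial_succ, Nat.cast_mul, Nat.cast_add, Nat.cast_one]
    have h3 : ((a+b)! : ℝ) ≠ 0 := by positivity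
    have h4 : ((a:ℝ)+1) ≠ 0 := by positivity
    have h5 : ((a:ℝ)+(b+1)+1) ≠ 0 := by positivity
    field_simp
    ring

lemma aux_summable {X : Type*} [NormedAddCommGroup X] [NormedSpace ℝ X] [CompleteSpace X] [Nontrivial X]
    (T : X →L[ℝ] X) (c : ℝ) :
    Summable (fun k : ℕ => ((c ^ k / k !) : ℝ) • T ^ k) := by
  apply Summable.of_norm
  apply Summable.of_nonneg_of_le (fun k => norm_nonneg _) ?_
    (Real.summable_pow_div_factorial (|c| * ‖T‖))
  intro k
  refine le_trans (norm_smul_le (c ^ k / (k ! : ℝ)) (T ^ k)) ?_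
  have h1 : ‖T ^ k‖ ≤ ‖T‖ ^ k := norm_pow_le T k
  have h2 : ‖(c ^ k / k ! : ℝ)‖ = |c| ^ k / k ! := by
    rw [Real.norm_eq_abs, abs_div, abs_pow, Nat.abs_cast]
  rw [h2, mul_pow]
  calc |c| ^ k / (k ! : ℝ) * ‖T ^ k‖ ≤ |c| ^ k / (k ! : ℝ) * ‖T‖ ^ k := by
        gcongr
    _ = |c| ^ k * ‖T‖ ^ k / (k ! : ℝ) := by ring

/-- The operator `φ_ℓ(T) = ∑_{k=0}^∞ T^k / (ℓ+k)!` (for `ℓ = 0` this is `exp T`). -/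
noncomputable def phi {X : Type*} [NormedAddCommGroup X] [NormedSpace ℝ X] [CompleteSpace X]
    (ℓ : ℕ) (T : X →L[ℝ] X) : X →L[ℝ] X :=
  ∑' k : ℕ, (((ℓ + k)! : ℝ)⁻¹) • T ^ k

set_option synthInstance.maxHeartbeats 1000000 in
theorem stmt0 {X : Type*} [NormedAddCommGroup X] [NormedSpace ℝ X] [CompleteSpace X]
    [Nontrivial X] (T : X →L[ℝ] X) (ℓ : ℕ) (hℓ : 1 ≤ ℓ) :
    Summable (fun k : ℕ => (((ℓ + k)! : ℝ)⁻¹) • T ^ k) ∧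
    (((ℓ - 1)! : ℝ)⁻¹) •
        (∫ θ in (0:ℝ)..1, θ ^ (ℓ - 1) • NormedSpace.exp ((1 - θ) • T)) = phi ℓ T := by
  obtain ⟨m, rfl⟩ := Nat.exists_eq_add_of_le' hℓ
  simp only [Nat.add_sub_cancel]
  set F : ℕ → ℝ → (X →L[ℝ] X) := fun k θ => (((θ^m * (1-θ)^k) / k !) : ℝ) • T ^ k with hF
  -- summability of the phi series
  have hsum : Summable (fun k : ℕ => (((m+1+k)! : ℝ)⁻¹) • T ^ k) := by
    apply Summable.of_norm
    apply Summable.of_nonneg_of_le (fun k => norm_nonneg _) ?_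
      (Real.summable_pow_div_factorial ‖T‖)
    intro k
    refine le_trans (norm_smul_le (((m+1+k)! : ℝ)⁻¹) (T ^ k)) ?_
    have h1 : ‖T ^ k‖ ≤ ‖T‖ ^ k := norm_pow_le T k
    have h2 : ‖(((m+1+k)! : ℝ))⁻¹‖ = ((m+1+k)! : ℝ)⁻¹ := by
      rw [Real.norm_eq_abs, abs_of_nonneg]; positivity
    have h3 : ((m+1+k)! : ℝ)⁻¹ ≤ ((k ! : ℝ))⁻¹ := by
      apply inv_anti₀ (by positivity)
      exact_mod_cast Nat.factorial_le (by omega)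
    calc ‖(((m+1+k)! : ℝ))⁻¹‖ * ‖T ^ k‖ ≤ ((k ! : ℝ))⁻¹ * ‖T‖ ^ k := by
          rw [h2]; gcongr
      _ = ‖T‖ ^ k / k ! := by ring
  refine ⟨hsum, ?_⟩
  -- integrability of each term
  have hFcont : ∀ k, Continuous (F k) := by
    intro k
    exact ((continuous_pow m).mul ((continuous_const.sub continuous_id).pow k)).div_const _
      |>.smul continuous_const
  have hFint : ∀ k, Integrable (F k) (volume.restrict (Set.Ioc (0:ℝ) 1)) := fun k =>
    (hFcont k).integrableOn_Ioc
  -- pointwise bound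
  have hbound : ∀ k, ∀ θ ∈ Set.Ioc (0:ℝ) 1, ‖F k θ‖ ≤ ‖T‖ ^ k / k ! := by
    intro k θ hθ
    refine le_trans (norm_smul_le (((θ^m * (1-θ)^k) / k !) : ℝ) (T ^ k)) ?_
    have hθ0 : (0:ℝ) ≤ θ := le_of_lt hθ.1
    have h1θ : (0:ℝ) ≤ 1 - θ := by linarith [hθ.2]
    have hs1 : θ ^ m ≤ 1 := pow_le_one₀ hθ0 hθ.2
    have hs2 : (1-θ) ^ k ≤ 1 := pow_le_one₀ h1θ (by linarith [hθ.1])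
    have hnn : (0:ℝ) ≤ θ^m * (1-θ)^k / k ! := by positivity
    have h2 : ‖((θ^m * (1-θ)^k) / k ! : ℝ)‖ = θ^m * (1-θ)^k / k ! := by
      rw [Real.norm_eq_abs, abs_of_nonneg hnn]
    rw [h2]
    have h1 : ‖T ^ k‖ ≤ ‖T‖ ^ k := norm_pow_le T k
    calc θ^m * (1-θ)^k / k ! * ‖T ^ k‖ ≤ 1 * 1 / k ! * ‖T‖ ^ k := by
          gcongr
      _ = ‖T‖ ^ k / k ! := by ring
  -- summability of integrals of norms
  have hnormint : Summable
      (fun k => ∫ θ, ‖F k θ‖ ∂(volume.restrict (Set.Ioc (0:ℝ) 1))) := by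
    apply Summable.of_nonneg_of_le
      (fun k => integral_nonneg (fun θ => norm_nonneg _)) ?_
      (Real.summable_pow_div_factorial ‖T‖)
    intro k
    have hle : (∫ θ in Set.Ioc (0:ℝ) 1, ‖F k θ‖)
        ≤ ∫ _θ in Set.Ioc (0:ℝ) 1, (‖T‖ ^ k / k !) := by
      apply setIntegral_mono_on ((hFint k).norm) _ measurableSet_Ioc (hbound k)
      exact integrableOn_const (by simp) (by simp)
    refine le_trans hle ?_
    rw [setIntegral_const]
    simp [Real.volume_Ioc]
  have hhs := MeasureTheory.hasSum_integral_of_summable_integral_norm hFint hnormint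
  -- pointwise sum identity
  have hFsum_eq : ∀ θ : ℝ,
      (∑' k, F k θ) = θ ^ m • NormedSpace.exp ((1-θ) • T) := by
    intro θ
    rw [NormedSpace.exp_eq_tsum (𝕂 := ℝ)]
    dsimp only
    have hterm : ∀ k : ℕ, ((k ! : ℝ)⁻¹) • ((1-θ) • T) ^ k
        = (((1-θ)^k / k !) : ℝ) • T ^ k := by
      intro k
      rw [smul_pow, smul_smul, inv_mul_eq_div]
    rw [tsum_congr hterm, ← Summable.tsum_const_smul (θ ^ m) (aux_summable T (1-θ))]
    apply tsum_congr
    intro k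
    show (((θ^m * (1-θ)^k) / k !) : ℝ) • T ^ k = _
    rw [smul_smul]
    congr 1
    ring
  -- value of each term integral, via the beta integral
  have hterm_int : ∀ k, (∫ θ in Set.Ioc (0:ℝ) 1, F k θ)
      = ((m ! : ℝ) / (m+k+1)!) • T ^ k := by
    intro k
    rw [← intervalIntegral.integral_of_le zero_le_one]
    have : (∫ θ in (0:ℝ)..1, F k θ)
        = (∫ θ in (0:ℝ)..1, ((θ^m * (1-θ)^k) / k ! : ℝ)) • T ^ k :=
      intervalIntegral.integral_smul_const _ _
    rw [this, intervalIntegral.integral_div, beta_nat k m]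
    congr 1
    have h1 : ((k !:ℝ)) ≠ 0 := by positivity
    have h2 : (((m+k+1)!:ℝ)) ≠ 0 := by positivity
    field_simp
  -- put everything together
  rw [intervalIntegral.integral_of_le zero_le_one]
  have hmain : (∫ θ in Set.Ioc (0:ℝ) 1, θ ^ m • NormedSpace.exp ((1-θ) • T))
      = ∑' k, ((m ! : ℝ) / (m+k+1)!) • T ^ k := by
    calc (∫ θ in Set.Ioc (0:ℝ) 1, θ ^ m • NormedSpace.exp ((1-θ) • T))
        = ∫ θ in Set.Ioc (0:ℝ) 1, ∑' k, F k θ := by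
          apply MeasureTheory.integral_congr_ae
          filter_upwards with θ
          rw [hFsum_eq]
      _ = ∑' k, ∫ θ in Set.Ioc (0:ℝ) 1, F k θ := hhs.tsum_eq.symm
      _ = ∑' k, ((m ! : ℝ) / (m+k+1)!) • T ^ k := tsum_congr hterm_int
  rw [hmain]
  have hsum2 : Summable (fun k : ℕ => ((m ! : ℝ) / (m+k+1)!) • T ^ k) := by
    have := hhs.summable
    rwa [funext hterm_int] at this
  rw [← Summable.tsum_const_smul ((m ! : ℝ)⁻¹) hsum2]
  show _ = phi (m+1) T
  rw [phi]
  apply tsum_congr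
  intro k
  rw [smul_smul]
  congr 1
  rw [show m+1+k = m+k+1 from by omega]
  have h1 : ((m !:ℝ)) ≠ 0 := by positivity
  have h2 : (((m+k+1)!:ℝ)) ≠ 0 := by positivity
  field_simp
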